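/- Let $G$ be an edge-transitive finite simple graph without isolated vertices or isolated edges, and let $e'$ be any edge of $G$. Then $p_G(x) = p_{G - e'}(x)$. -/

import Mathlib

open Finset

noncomputable section
open scoped Classical

namespace ForestBuilding

variable {V : Type*} [Fintype V]

/-- A uniformly random ordering of the edges of `G` is a bijection from the
edges of `G` to initial segment positions. -/
abbrev EdgeOrdering (G : SimpleGraph V) : Type _ :=
  ↥G.edgeFinset ≃ Fin G.edgeFinset.card

/-- Two edges (as unordered pairs) share a vertex. -/
def SharesVertex {V : Type*} (e f : Sym2 V) : Prop := ∃ v, v ∈ e ∧ v ∈ f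

/-- The number of connected components of the spanning forest produced by the
forest building process run with the edge ordering `π`:  an edge starts a new
component iff it precedes every other edge sharing one of its vertices, and the
number of components (ignoring isolated vertices) is the number of such edges. -/
def numComponents (G : SimpleGraph V) (π : EdgeOrdering G) : ℕ :=
  (univ.filter fun e : ↥G.edgeFinset =>
    ∀ f : ↥G.edgeFinset, f ≠ e → SharesVertex (e : Sym2 V) (f : Sym2 V) → π e < π f).card

/-- `P G k` is the probability that the forest building process on `G`, run with
a uniformly random edge ordering, produces a spanning forest with `k` components. -/
def P (G : SimpleGraph V) (k : ℕ) : ℚ :=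
  ((univ.filter fun π : EdgeOrdering G => numComponents G π = k).card : ℚ) /
    (Fintype.card (EdgeOrdering G))

/-- The expected number of components of the forest building process on `G`. -/
def expComponents (G : SimpleGraph V) : ℚ :=
  (∑ π : EdgeOrdering G, (numComponents G π : ℚ)) / (Fintype.card (EdgeOrdering G))

/-- The component generating function `p_G(x) = ∑ₖ P(G,k) xᵏ`, evaluated at `x`.
Isolated vertices contribute nothing, matching the convention `p_{K₁}(x) = 1`. -/
def pPoly (G : SimpleGraph V) (x : ℚ) : ℚ :=
  (∑ π : EdgeOrdering G, x ^ numComponents G π) / (Fintype.card (EdgeOrdering G))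

/-- The sum of the degrees of the two endpoints of an edge. -/
def degSum (G : SimpleGraph V) (e : Sym2 V) : ℕ :=
  Sym2.lift ⟨fun u v => G.degree u + G.degree v, fun _ _ => Nat.add_comm _ _⟩ e

attribute [-instance] SimpleGraph.instDecidableRelAdjDeleteEdgesOfDecidablePredSym2MemSetOfDecidableEq


omit [Fintype V] in
lemma SharesVertex.map {W : Type*} (φ : V ≃ W) {e f : Sym2 V} (h : SharesVertex e f) :
    SharesVertex (Sym2.map φ e) (Sym2.map φ f) := by
  obtain ⟨v, he, hf⟩ := h
  exact ⟨φ v, Sym2.mem_map.mpr ⟨v, he, rfl⟩, Sym2.mem_map.mpr ⟨v, hf, rfl⟩⟩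

omit [Fintype V] in
lemma sharesVertex_map_iff {W : Type*} (φ : V ≃ W) {e f : Sym2 V} :
    SharesVertex (Sym2.map φ e) (Sym2.map φ f) ↔ SharesVertex e f := by
  refine ⟨fun h => ?_, fun h => h.map φ⟩
  have := h.map φ.symm
  simpa [Sym2.map_map, Function.comp] using this

def edgeEquiv {G G' : SimpleGraph V} (φ : G ≃g G') :
    ↥G.edgeFinset ≃ ↥G'.edgeFinset := by
  refine Equiv.subtypeEquiv (α := Sym2 V) (β := Sym2 V)
    ⟨Sym2.map φ, Sym2.map φ.symm, ?_, ?_⟩ ?_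
  · intro z; simp [Sym2.map_map, Function.comp]
  · intro z; simp [Sym2.map_map, Function.comp]
  · intro e
    simp only [SimpleGraph.mem_edgeFinset]
    exact (SimpleGraph.Iso.map_mem_edgeSet_iff φ).symm

@[simp] lemma edgeEquiv_coe {G G' : SimpleGraph V} (φ : G ≃g G') (e : ↥G.edgeFinset) :
    (edgeEquiv φ e : Sym2 V) = Sym2.map φ (e : Sym2 V) := rfl

lemma edge_card_eq {G G' : SimpleGraph V} (φ : G ≃g G') :
    G.edgeFinset.card = G'.edgeFinset.card := by
  rw [← Fintype.card_coe G.edgeFinset, ← Fintype.card_coe G'.edgeFinset]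
  exact Fintype.card_congr (edgeEquiv φ)

lemma numComponents_transfer {G G' : SimpleGraph V}
    (ε : ↥G.edgeFinset ≃ ↥G'.edgeFinset)
    (hshare : ∀ a b : ↥G.edgeFinset,
      SharesVertex (a : Sym2 V) (b : Sym2 V) ↔ SharesVertex (ε a : Sym2 V) (ε b : Sym2 V))
    (π : EdgeOrdering G) (π' : EdgeOrdering G')
    (hlt : ∀ a b : ↥G.edgeFinset, π a < π b ↔ π' (ε a) < π' (ε b)) :
    numComponents G π = numComponents G' π' := by
  unfold numComponents
  apply Finset.card_bij' (fun a _ => ε a) (fun b _ => ε.symm b)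
  · intro a ha
    simp only [mem_filter, mem_univ, true_and] at ha ⊢
    intro f' hne hsh
    have h1 : ε.symm f' ≠ a := by
      intro h; apply hne; rw [← h]; simp
    have h2 : SharesVertex (a : Sym2 V) ((ε.symm f' : ↥G.edgeFinset) : Sym2 V) := by
      rw [hshare]; simpa using hsh
    have := ha (ε.symm f') h1 h2
    rw [hlt] at this
    simpa using this
  · intro b hb
    simp only [mem_filter, mem_univ, true_and] at hb ⊢
    intro f hne hsh
    rw [hlt, Equiv.apply_symm_apply]
    apply hb (ε f)
    · intro h; apply hne; apply ε.injective; rw [h]; simp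
    · have := (hshare (ε.symm b) f).mp hsh
      simpa using this
  · intro a _; simp
  · intro b _; simp

lemma sum_iso {G G' : SimpleGraph V} (φ : G ≃g G') (x : ℚ) :
    ∑ π : EdgeOrdering G, x ^ numComponents G π
      = ∑ π' : EdgeOrdering G', x ^ numComponents G' π' := by
  refine Fintype.sum_equiv ((edgeEquiv φ).equivCongr (finCongr (edge_card_eq φ))) _ _ ?_
  intro π
  congr 1
  apply numComponents_transfer (edgeEquiv φ)
  · intro a b
    simp only [edgeEquiv_coe]
    exact (sharesVertex_map_iff φ.toEquiv).symm
  · intro a b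
    rw [Equiv.equivCongr_apply_apply, Equiv.equivCongr_apply_apply]
    rw [Equiv.symm_apply_apply, Equiv.symm_apply_apply]
    exact Iff.rfl

section Delete
variable (G : SimpleGraph V) (e : ↥G.edgeFinset)

lemma mem_del_iff (s : Sym2 V) :
    s ∈ (G.deleteEdges {(e : Sym2 V)}).edgeFinset ↔ s ∈ G.edgeFinset ∧ s ≠ (e : Sym2 V) := by
  simp [SimpleGraph.mem_edgeFinset, SimpleGraph.edgeSet_deleteEdges]

def delEquiv : ↥(G.deleteEdges {(e : Sym2 V)}).edgeFinset ≃ {f : ↥G.edgeFinset // f ≠ e} where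
  toFun f := ⟨⟨(f : Sym2 V), ((mem_del_iff G e _).1 f.2).1⟩,
    fun h => ((mem_del_iff G e _).1 f.2).2 (congrArg Subtype.val h)⟩
  invFun f := ⟨(f.1 : Sym2 V), (mem_del_iff G e _).2 ⟨f.1.2, fun h => f.2 (Subtype.ext h)⟩⟩
  left_inv f := rfl
  right_inv f := rfl

@[simp] lemma delEquiv_coe (f) : (((delEquiv G e) f).1 : Sym2 V) = (f : Sym2 V) := rfl
@[simp] lemma delEquiv_symm_coe (f) :
    (((delEquiv G e).symm f : ↥(G.deleteEdges {(e : Sym2 V)}).edgeFinset) : Sym2 V)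
      = (f.1 : Sym2 V) := rfl

lemma edgeFinset_del :
    (G.deleteEdges {(e : Sym2 V)}).edgeFinset = G.edgeFinset.erase (e : Sym2 V) := by
  ext s
  rw [mem_del_iff, Finset.mem_erase]
  tauto

lemma card_del : (G.deleteEdges {(e : Sym2 V)}).edgeFinset.card + 1 = G.edgeFinset.card := by
  rw [edgeFinset_del]
  exact Finset.card_erase_add_one e.2

def extOrdering (π' : EdgeOrdering (G.deleteEdges {(e : Sym2 V)})) : EdgeOrdering G :=
  (((Equiv.optionSubtypeNe e).symm.trans
    (Equiv.optionCongr ((delEquiv G e).symm.trans π'))).trans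
    finSuccEquivLast.symm).trans (finCongr (card_del G e))

lemma extOrdering_self (π' : EdgeOrdering (G.deleteEdges {(e : Sym2 V)})) :
    ((extOrdering G e π' e : Fin G.edgeFinset.card) : ℕ)
      = (G.deleteEdges {(e : Sym2 V)}).edgeFinset.card := by
  simp [extOrdering, Equiv.optionSubtypeNe_symm_self, ← Equiv.optionCongr_symm, Equiv.optionCongr_apply]

lemma extOrdering_ne (π' : EdgeOrdering (G.deleteEdges {(e : Sym2 V)})) (f) (h : f ≠ e) :
    ((extOrdering G e π' f : Fin G.edgeFinset.card) : ℕ)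
      = ((π' ((delEquiv G e).symm ⟨f, h⟩) : Fin _) : ℕ) := by
  simp [extOrdering, Equiv.optionSubtypeNe_symm_of_ne h, ← Equiv.optionCongr_symm, Equiv.optionCongr_apply,
    finSuccEquivLast_symm_some]

lemma numComponents_ext
    (hne : ∃ g : ↥G.edgeFinset, g ≠ e ∧ SharesVertex (e : Sym2 V) (g : Sym2 V))
    (π' : EdgeOrdering (G.deleteEdges {(e : Sym2 V)})) :
    numComponents G (extOrdering G e π')
      = numComponents (G.deleteEdges {(e : Sym2 V)}) π' := by
  set π := extOrdering G e π' with hπ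
  have haux : ∀ a : ↥G.edgeFinset,
      (∀ f : ↥G.edgeFinset, f ≠ a → SharesVertex (a : Sym2 V) (f : Sym2 V) → π a < π f) →
      a ≠ e := by
    rintro a ha rfl
    obtain ⟨g, hg, hsh⟩ := hne
    have h1 := ha g hg hsh
    rw [Fin.lt_def, extOrdering_self, extOrdering_ne G a π' g hg] at h1
    exact absurd h1 (π' ((delEquiv G a).symm ⟨g, hg⟩)).isLt.le.not_gt
  unfold numComponents
  refine Finset.card_bij'
    (fun a ha => (delEquiv G e).symm
      ⟨a, haux a (by simpa using (Finset.mem_filter.1 ha).2)⟩)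
    (fun b _ => ((delEquiv G e) b).1) ?_ ?_ ?_ ?_
  · intro a ha
    have ha' := (Finset.mem_filter.1 ha).2
    rw [Finset.mem_filter]
    refine ⟨Finset.mem_univ _, ?_⟩
    intro f' hne' hsh'
    have hbne : ((delEquiv G e) f').1 ≠ a := by
      intro h
      apply hne'
      have h2 : f' = (delEquiv G e).symm ⟨((delEquiv G e) f').1, ((delEquiv G e) f').2⟩ := by
        simp
      rw [h2]
      congr 1
      exact Subtype.ext h
    have h2 := ha' ((delEquiv G e) f').1 hbne (by simpa using hsh')
    rw [Fin.lt_def, hπ, extOrdering_ne G e π' a (haux a ha'),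
      extOrdering_ne G e π' _ ((delEquiv G e) f').2] at h2
    rw [Fin.lt_def]
    convert h2 using 2
    simp
  · intro b hb
    have hb' := (Finset.mem_filter.1 hb).2
    rw [Finset.mem_filter]
    refine ⟨Finset.mem_univ _, ?_⟩
    intro f hnef hshf
    by_cases hfe : f = e
    · subst hfe
      rw [Fin.lt_def, hπ, extOrdering_self, extOrdering_ne G f π' _ ((delEquiv G f) b).2]
      have h3 : (delEquiv G f).symm ⟨((delEquiv G f) b).1, ((delEquiv G f) b).2⟩ = b := by simp
      rw [h3]
      exact (π' b).isLt
    · have hfb : (delEquiv G e).symm ⟨f, hfe⟩ ≠ b := by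
        intro h
        apply hnef
        apply Subtype.ext
        have h4 := congrArg
          (fun z => ((z : ↥(G.deleteEdges {(e : Sym2 V)}).edgeFinset) : Sym2 V)) h
        simpa using h4
      have h2 := hb' _ hfb (by simpa using hshf)
      rw [Fin.lt_def, hπ, extOrdering_ne G e π' _ ((delEquiv G e) b).2,
        extOrdering_ne G e π' f hfe]
      rw [Fin.lt_def] at h2
      convert h2 using 2
      simp
  · intro a ha
    simp
  · intro b hb
    simp

end Delete
lemma extOrdering_injective (G : SimpleGraph V) :
    Function.Injective (fun p : Σ e : ↥G.edgeFinset,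
        EdgeOrdering (G.deleteEdges {(e : Sym2 V)}) => extOrdering G p.1 p.2) := by
  rintro ⟨e₁, π₁⟩ ⟨e₂, π₂⟩ h
  simp only at h
  have he : e₁ = e₂ := by
    by_contra hne
    have h1 := congrArg Fin.val (DFunLike.congr_fun h e₁)
    rw [extOrdering_self, extOrdering_ne G e₂ π₂ e₁ hne] at h1
    have h2 := (π₂ ((delEquiv G e₂).symm ⟨e₁, hne⟩)).isLt
    have h3 := card_del G e₁
    have h4 := card_del G e₂
    omega
  subst he
  have hpi : π₁ = π₂ := by
    apply Equiv.ext
    intro f'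
    have hne := ((delEquiv G e₁) f').2
    have h1 := congrArg Fin.val (DFunLike.congr_fun h ((delEquiv G e₁) f').1)
    rw [extOrdering_ne G e₁ π₁ _ hne, extOrdering_ne G e₁ π₂ _ hne] at h1
    have h5 : (delEquiv G e₁).symm ⟨((delEquiv G e₁) f').1, hne⟩ = f' := by simp
    rw [h5] at h1
    exact Fin.val_injective h1
  rw [hpi]

lemma card_ordering (G : SimpleGraph V) :
    Fintype.card (EdgeOrdering G) = Nat.factorial G.edgeFinset.card := by
  rw [Fintype.card_equiv G.edgeFinset.equivFin, Fintype.card_coe]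

lemma sum_del (G : SimpleGraph V) (h0 : 0 < G.edgeFinset.card)
    (hnbr : ∀ e : ↥G.edgeFinset,
      ∃ g : ↥G.edgeFinset, g ≠ e ∧ SharesVertex (e : Sym2 V) (g : Sym2 V)) (x : ℚ) :
    ∑ π : EdgeOrdering G, x ^ numComponents G π
      = ∑ e : ↥G.edgeFinset, ∑ π' : EdgeOrdering (G.deleteEdges {(e : Sym2 V)}),
          x ^ numComponents (G.deleteEdges {(e : Sym2 V)}) π' := by
  have hcard : Fintype.card (Σ e : ↥G.edgeFinset,
      EdgeOrdering (G.deleteEdges {(e : Sym2 V)})) = Fintype.card (EdgeOrdering G) := by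
    rw [Fintype.card_sigma, card_ordering]
    have hc : ∀ e : ↥G.edgeFinset,
        Fintype.card (EdgeOrdering (G.deleteEdges {(e : Sym2 V)}))
          = Nat.factorial (G.edgeFinset.card - 1) := by
      intro e
      rw [card_ordering]
      congr 1
      have := card_del G e
      omega
    rw [Finset.sum_congr rfl fun e _ => hc e, Finset.sum_const, Finset.card_univ,
      Fintype.card_coe, smul_eq_mul]
    rw [← Nat.succ_pred_eq_of_pos h0, Nat.factorial_succ, Nat.succ_sub_one]
  have hbij : Function.Bijective (fun p : Σ e : ↥G.edgeFinset,
      EdgeOrdering (G.deleteEdges {(e : Sym2 V)}) => extOrdering G p.1 p.2) :=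
    (Fintype.bijective_iff_injective_and_card _).2 ⟨extOrdering_injective G, hcard⟩
  calc ∑ π : EdgeOrdering G, x ^ numComponents G π
      = ∑ p : Σ e : ↥G.edgeFinset, EdgeOrdering (G.deleteEdges {(e : Sym2 V)}),
          x ^ numComponents (G.deleteEdges {(p.1 : Sym2 V)}) p.2 := by
        refine (Fintype.sum_bijective _ hbij _ _ ?_).symm
        rintro ⟨e, π'⟩
        rw [numComponents_ext G e (hnbr e) π']
    _ = _ := by
        rw [← Finset.univ_sigma_univ, Finset.sum_sigma]

omit [Fintype V] in
lemma sym2_map_inj {W : Type*} (φ : V ≃ W) : Function.Injective (Sym2.map φ) := by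
  intro a b h
  have := congrArg (Sym2.map φ.symm) h
  simpa [Sym2.map_map, Function.comp] using this

def deleteIso (G : SimpleGraph V) (φ : G ≃g G) {e₁ e₂ : Sym2 V} (h : Sym2.map φ e₁ = e₂) :
    G.deleteEdges {e₁} ≃g G.deleteEdges {e₂} where
  toEquiv := φ.toEquiv
  map_rel_iff' := by
    intro u v
    simp only [SimpleGraph.deleteEdges_adj, Set.mem_singleton_iff]
    constructor
    · rintro ⟨hadj, hne⟩
      refine ⟨φ.map_adj_iff.1 hadj, fun hcontra => hne ?_⟩
      rw [← h, ← hcontra]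
      rfl
    · rintro ⟨hadj, hne⟩
      refine ⟨φ.map_adj_iff.2 hadj, fun hcontra => hne ?_⟩
      apply sym2_map_inj φ.toEquiv
      rw [Sym2.map_pair_eq]
      exact hcontra.trans h.symm
/-- **Edge-transitive graphs** (Corollary of the recurrence):  if `G` is
edge-transitive (any edge can be mapped to any other edge by an automorphism),
has no isolated vertices and no isolated edges, and `e'` is an edge of `G`,
then `p_G(x) = p_{G - e'}(x)`. -/
theorem pPoly_edge_transitive (G : SimpleGraph V)
    (htrans : ∀ e₁ ∈ G.edgeSet, ∀ e₂ ∈ G.edgeSet,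
      ∃ φ : G ≃g G, Sym2.map φ e₁ = e₂)
    (hiso : ∀ v : V, 0 < G.degree v)
    (hedge : ∀ u v : V, G.Adj u v → 2 ≤ G.degree u ∨ 2 ≤ G.degree v)
    (e' : Sym2 V) (he' : e' ∈ G.edgeSet) :
    ∀ x : ℚ, pPoly G x = pPoly (G.deleteEdges {e'}) x := by
  intro x
  have he'F : e' ∈ G.edgeFinset := SimpleGraph.mem_edgeFinset.2 he'
  have h0 : 0 < G.edgeFinset.card := Finset.card_pos.2 ⟨e', he'F⟩
  have hnbr : ∀ e : ↥G.edgeFinset,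
      ∃ g : ↥G.edgeFinset, g ≠ e ∧ SharesVertex (e : Sym2 V) (g : Sym2 V) := by
    rintro ⟨e, he⟩
    revert he
    induction e using Sym2.ind with
    | _ u v =>
      intro he
      have hadj : G.Adj u v := by simpa using he
      rcases hedge u v hadj with hu | hv
      · have hcard : 1 < (G.neighborFinset u).card := by
          rw [SimpleGraph.card_neighborFinset_eq_degree]; omega
        obtain ⟨w, hw, hwv⟩ := Finset.exists_mem_ne hcard v
        have hadjw : G.Adj u w := (SimpleGraph.mem_neighborFinset G u w).1 hw
        refine ⟨⟨s(u, w), SimpleGraph.mem_edgeFinset.2 hadjw⟩, ?_, ⟨u, ?_, ?_⟩⟩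
        · intro hcontra
          have h1 := congrArg Subtype.val hcontra
          simp only [Sym2.eq_iff] at h1
          rcases h1 with ⟨-, h2⟩ | ⟨h1, -⟩
          · exact hwv h2
          · exact hadj.ne h1
        · simp
        · simp
      · have hcard : 1 < (G.neighborFinset v).card := by
          rw [SimpleGraph.card_neighborFinset_eq_degree]; omega
        obtain ⟨w, hw, hwu⟩ := Finset.exists_mem_ne hcard u
        have hadjw : G.Adj v w := (SimpleGraph.mem_neighborFinset G v w).1 hw
        refine ⟨⟨s(v, w), SimpleGraph.mem_edgeFinset.2 hadjw⟩, ?_, ⟨v, ?_, ?_⟩⟩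
        · intro hcontra
          have h1 := congrArg Subtype.val hcontra
          simp only [Sym2.eq_iff] at h1
          rcases h1 with ⟨h1, -⟩ | ⟨-, h2⟩
          · exact hadj.ne h1.symm
          · exact hwu h2
        · simp
        · simp
  have hsame : ∀ e : ↥G.edgeFinset,
      (∑ π' : EdgeOrdering (G.deleteEdges {(e : Sym2 V)}),
        x ^ numComponents (G.deleteEdges {(e : Sym2 V)}) π')
      = ∑ π' : EdgeOrdering (G.deleteEdges {e'}),
          x ^ numComponents (G.deleteEdges {e'}) π' := by
    intro e
    obtain ⟨φ, hφ⟩ := htrans (e : Sym2 V) (SimpleGraph.mem_edgeFinset.1 e.2) e' he'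
    exact sum_iso (deleteIso G φ hφ) x
  rw [pPoly, pPoly, sum_del G h0 hnbr x]
  rw [Finset.sum_congr rfl fun e _ => hsame e]
  rw [Finset.sum_const, Finset.card_univ, Fintype.card_coe, card_ordering, card_ordering]
  have hc : (G.deleteEdges {e'}).edgeFinset.card + 1 = G.edgeFinset.card :=
    card_del G ⟨e', he'F⟩
  rw [← hc, Nat.factorial_succ, nsmul_eq_mul]
  push_cast
  rw [mul_div_mul_left _ _ (by positivity)]
end ForestBuilding
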